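/- Let (α, v) be a cocycle crossed action of a group G on a group U, H ⊴ G normal with v(m,n) = 1 for m,n ∈ H, s : G/H → G a section with s(ē) = e, m(p,q) = s(pq)⁻¹ s(p) s(q), and c(p,q) = v(s(p),s(q)) v(s(pq), m(p,q))⁻¹. Then for all p,q ∈ G/H one has, as automorphisms of U: α_{s(p)} ∘ α_{s(q)} = Ad(c(p,q)) ∘ α_{s(pq)} ∘ α_{m(p,q)}. -/
import Mathlib


/-- `α_{s(p)} ∘ α_{s(q)} = Ad(c(p,q)) ∘ α_{s(pq)} ∘ α_{m(p,q)}` as maps on `U`. -/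
theorem stmt6 {G U : Type*} [Group G] [Group U]
    (α : G → MulAut U) (v : G → G → U)
    (hα1 : α 1 = 1)
    (hv1 : ∀ h : G, v 1 h = 1) (hv2 : ∀ g : G, v g 1 = 1)
    (hAd : ∀ g h : G, ∀ x : U, α g (α h x) = v g h * α (g * h) x * (v g h)⁻¹)
    (hcoc : ∀ g h k : G, v g h * v (g * h) k = α g (v h k) * v g (h * k))
    (H : Subgroup G) [H.Normal]
    (hvH : ∀ m n : G, m ∈ H → n ∈ H → v m n = 1)
    (s : G ⧸ H → G)
    (hs : ∀ p : G ⧸ H, (QuotientGroup.mk (s p) : G ⧸ H) = p)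
    (hse : s 1 = 1)
    (m : G ⧸ H → G ⧸ H → G)
    (hm : ∀ p q : G ⧸ H, m p q = (s (p * q))⁻¹ * s p * s q)
    (c : G ⧸ H → G ⧸ H → U)
    (hc : ∀ p q : G ⧸ H, c p q = v (s p) (s q) * (v (s (p * q)) (m p q))⁻¹) :
    ∀ p q : G ⧸ H, ∀ x : U,
      α (s p) (α (s q) x) =
        c p q * α (s (p * q)) (α (m p q) x) * (c p q)⁻¹ := by
  intro p q x
  have hkey : s (p * q) * m p q = s p * s q := by rw [hm]; group
  rw [hAd, hAd, hkey, hc]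
  group
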